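/- For every infinite cardinal β, the topological power S^β of the Sierpiński space S is β-sequential: for any subset A of S^β, if A contains the limits of every α-indexed transfinite sequence of its elements for all infinite regular cardinals α ≤ β, then A is closed. -/

import Mathlib

open Filter Topology

universe u

/-- The two points of the Sierpiński space. -/
inductive SPt : Type
  | zero
  | one
deriving DecidableEq

/-- The Sierpiński topology: `{zero}` is open, `{one}` is not. -/
instance : TopologicalSpace SPt := TopologicalSpace.generateFrom {{SPt.zero}}

/-- `A` is closed under limits of `o`-indexed transfinite sequences for all infinite
ordinals `o ≤ β` (β an infinite cardinal, viewed as an ordinal). -/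
def OrdSeqClosed {X : Type u} [TopologicalSpace X] (β : Cardinal.{u}) (A : Set X) : Prop :=
  ∀ o : Ordinal.{u}, Ordinal.omega0 ≤ o → o ≤ β.ord →
    ∀ f : o.ToType → X, (∀ i, f i ∈ A) →
    ∀ x : X, Filter.Tendsto f Filter.atTop (nhds x) → x ∈ A

/-- A space is β-sequential if every such subset is closed. -/
def IsBetaSequential (X : Type u) [TopologicalSpace X] (β : Cardinal.{u}) : Prop :=
  ∀ A : Set X, OrdSeqClosed β A → IsClosed A

/-- `A` contains limits of all convergent transfinite sequences of its points. -/
def TransSeqClosed {X : Type u} [TopologicalSpace X] (A : Set X) : Prop :=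
  ∀ o : Ordinal.{u}, Ordinal.omega0 ≤ o →
    ∀ f : o.ToType → X, (∀ i, f i ∈ A) →
    ∀ x : X, Filter.Tendsto f Filter.atTop (nhds x) → x ∈ A

/-- Pseudoradial space. -/
def IsPseudoradial (X : Type u) [TopologicalSpace X] : Prop :=
  ∀ A : Set X, TransSeqClosed A → IsClosed A

lemma SPt.isOpen_zero : IsOpen ({SPt.zero} : Set SPt) :=
  TopologicalSpace.isOpen_generateFrom_of_mem rfl

lemma SPt.nhds_zero : 𝓝 SPt.zero = pure SPt.zero :=
  le_antisymm (le_pure_iff.2 (SPt.isOpen_zero.mem_nhds rfl)) (pure_le_nhds _)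

lemma SPt.eq_univ_of_open (U : Set SPt) (hU : IsOpen U) (h1 : SPt.one ∈ U) : U = Set.univ := by
  have hU' : TopologicalSpace.GenerateOpen {{SPt.zero}} U := hU
  clear hU
  revert h1
  induction hU' with
  | basic s hs => rw [Set.mem_singleton_iff] at hs; subst hs; intro h1; cases h1
  | univ => intro _; rfl
  | inter s t _ _ ihs iht =>
    intro h1; rw [ihs h1.1, iht h1.2, Set.univ_inter]
  | sUnion S _ ih =>
    rintro ⟨s, hsS, hs⟩
    apply Set.eq_univ_of_univ_subset
    rw [← ih s hsS hs]
    exact Set.subset_sUnion_of_mem hsS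

lemma SPt.nhds_one : 𝓝 SPt.one = ⊤ := by
  refine le_antisymm le_top fun s hs => ?_
  rw [Filter.mem_top]
  obtain ⟨U, hUs, hU, h1⟩ := mem_nhds_iff.mp hs
  exact Set.eq_univ_of_univ_subset ((SPt.eq_univ_of_open U hU h1) ▸ hUs)

lemma tendsto_sierpinski {ι κ : Type*} {l : Filter ι} {f : ι → κ → SPt} {x : κ → SPt} :
    Tendsto f l (𝓝 x) ↔ ∀ j, x j = SPt.zero → ∀ᶠ ξ in l, f ξ j = SPt.zero := by
  rw [tendsto_pi_nhds]
  constructor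
  · intro h j hj
    have := h j
    rw [hj, SPt.nhds_zero, tendsto_pure] at this
    exact this
  · intro h j
    cases hj : x j with
    | zero => rw [SPt.nhds_zero, tendsto_pure]; exact h j hj
    | one => rw [SPt.nhds_one]; exact le_top

lemma nhds_le_of_zero_subset {κ : Type*} {x y : κ → SPt}
    (h : ∀ j, y j = SPt.zero → x j = SPt.zero) : 𝓝 x ≤ 𝓝 y := by
  rw [nhds_pi, nhds_pi]
  refine Filter.pi_mono fun j => ?_
  cases hj : y j with
  | zero => rw [h j hj]
  | one => rw [SPt.nhds_one]; exact le_top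

lemma mem_closure_of_zero_subset {κ : Type*} {A : Set (κ → SPt)} {x y : κ → SPt}
    (h : ∀ j, y j = SPt.zero → x j = SPt.zero) (hx : x ∈ closure A) : y ∈ closure A := by
  rw [mem_closure_iff_clusterPt] at hx ⊢
  exact Filter.NeBot.mono hx (inf_le_inf_right _ (nhds_le_of_zero_subset h))

/-- For every infinite cardinal β, `S^β` is β-sequential (with the closure
condition stated for all infinite regular cardinals α ≤ β). -/
theorem sierpinski_power_beta_sequential (β : Cardinal.{u}) (hβ : Cardinal.aleph0 ≤ β) :
    ∀ A : Set (β.ord.ToType → SPt),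
      (∀ α : Cardinal.{u}, Cardinal.aleph0 ≤ α → α.IsRegular → α ≤ β →
        ∀ f : α.ord.ToType → (β.ord.ToType → SPt), (∀ i, f i ∈ A) →
        ∀ x, Filter.Tendsto f Filter.atTop (nhds x) → x ∈ A) →
      IsClosed A := by
  intro A hA
  have key : ∀ μ : Cardinal.{u}, ∀ x : β.ord.ToType → SPt, x ∈ closure A →
      Cardinal.mk {j // x j = SPt.zero} ≤ μ → x ∈ A := by
    intro μ
    induction μ using Cardinal.lt_wf.induction with
    | _ μ IH =>
    intro x hx hcard
    by_cases hfin : Cardinal.mk {j // x j = SPt.zero} < Cardinal.aleph0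
    · -- finite zero set: use a constant ℵ₀-sequence
      have hZfin : {j | x j = SPt.zero}.Finite := by
        rw [← Set.finite_coe_iff]
        exact Cardinal.mk_lt_aleph0_iff.mp hfin
      have hU : IsOpen (⋂ j ∈ {j | x j = SPt.zero},
          (fun y : β.ord.ToType → SPt => y j) ⁻¹' {SPt.zero}) :=
        hZfin.isOpen_biInter fun j _ => SPt.isOpen_zero.preimage (continuous_apply j)
      have hxU : x ∈ ⋂ j ∈ {j | x j = SPt.zero},
          (fun y : β.ord.ToType → SPt => y j) ⁻¹' {SPt.zero} :=
        Set.mem_iInter₂.mpr fun j hj => hj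
      obtain ⟨a, haU, haA⟩ := _root_.mem_closure_iff.mp hx _ hU hxU
      refine hA Cardinal.aleph0 le_rfl Cardinal.isRegular_aleph0 hβ (fun _ => a)
        (fun _ => haA) x ?_
      rw [tendsto_sierpinski]
      intro j hj
      exact Filter.Eventually.of_forall fun _ => Set.mem_iInter₂.mp haU j hj
    · -- infinite zero set
      push_neg at hfin
      set μ₀ : Cardinal.{u} := Cardinal.mk {j // x j = SPt.zero} with hμ₀def
      have hμ₀β : μ₀ ≤ β := by
        refine le_trans (Cardinal.mk_subtype_le _) ?_
        rw [Cardinal.mk_ord_toType]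
      have e : {j // x j = SPt.zero} ≃ μ₀.ord.ToType :=
        Classical.choice (Cardinal.eq.mp (Cardinal.mk_ord_toType μ₀).symm)
      have hlim : Order.IsSuccLimit μ₀.ord := Cardinal.isSuccLimit_ord hfin
      have hreg : (μ₀.ord.cof).IsRegular := Cardinal.isRegular_cof hlim
      have hcofA : Cardinal.aleph0 ≤ μ₀.ord.cof := hreg.aleph0_le
      have hcofB : μ₀.ord.cof ≤ β := le_trans (Ordinal.cof_ord_le μ₀) hμ₀β
      have hclim : Order.IsSuccLimit (μ₀.ord.cof).ord := Cardinal.isSuccLimit_ord hcofA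
      obtain ⟨f, hf⟩ := Ordinal.exists_fundamental_sequence μ₀.ord
      haveI hne : Nonempty ((μ₀.ord.cof).ord.ToType) :=
        Ordinal.toType_nonempty_iff_ne_zero.mpr hclim.pos.ne'
      set em := Ordinal.ToType.mk (o := μ₀.ord) with hem
      set ec := Ordinal.ToType.mk (o := (μ₀.ord.cof).ord) with hec
      have hθlt : ∀ i : (μ₀.ord.cof).ord.ToType,
          f ((ec.symm i : Set.Iio (μ₀.ord.cof).ord) : Ordinal) (ec.symm i).2 < μ₀.ord :=
        fun i => hf.lt (ec.symm i).2
      set τ : (μ₀.ord.cof).ord.ToType → μ₀.ord.ToType :=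
        fun i => em ⟨f (ec.symm i).1 (ec.symm i).2, hθlt i⟩ with hτ
      set w : (μ₀.ord.cof).ord.ToType → (β.ord.ToType → SPt) := fun i j =>
        if h : x j = SPt.zero then (if e ⟨j, h⟩ < τ i then SPt.zero else SPt.one) else SPt.one
        with hw
      have hwsub : ∀ i j, w i j = SPt.zero → x j = SPt.zero := by
        intro i j hwj
        by_contra h
        rw [hw] at hwj
        simp only [dif_neg h] at hwj
        exact SPt.noConfusion hwj
      have hwlt : ∀ i j (h : x j = SPt.zero), w i j = SPt.zero → e ⟨j, h⟩ < τ i := by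
        intro i j h hwj
        by_contra hlt
        rw [hw] at hwj
        simp only [dif_pos h, if_neg hlt] at hwj
        exact SPt.noConfusion hwj
      have hwA : ∀ i, w i ∈ A := by
        intro i
        have hclt : Cardinal.mk {j // w i j = SPt.zero} < μ := by
          have hg : Function.Injective
              (fun p : {j // w i j = SPt.zero} =>
                (⟨e ⟨p.1, hwsub i p.1 p.2⟩, hwlt i p.1 (hwsub i p.1 p.2) p.2⟩ :
                  Set.Iio (τ i))) := by
            intro p q hpq
            have h2 := e.injective (Subtype.ext_iff.mp hpq)
            have h3 := congrArg Subtype.val h2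
            exact Subtype.ext h3
          exact lt_of_lt_of_le
            (lt_of_le_of_lt (Cardinal.mk_le_of_injective hg)
              (Cardinal.mk_Iio_ord_toType (τ i))) hcard
        exact IH _ hclt (w i) (mem_closure_of_zero_subset (hwsub i) hx) le_rfl
      have hconv : Tendsto w atTop (𝓝 x) := by
        rw [tendsto_sierpinski]
        intro j hj
        obtain ⟨b, hb, hzb⟩ := Ordinal.lt_blsub_iff.mp
          (show ((em.symm (e ⟨j, hj⟩) : Set.Iio μ₀.ord) : Ordinal) < Ordinal.blsub _ f by
            rw [hf.blsub_eq]; exact (em.symm (e ⟨j, hj⟩)).2)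
        have hb1 : Order.succ b < (μ₀.ord.cof).ord := hclim.succ_lt hb
        refine eventually_atTop.mpr ⟨ec ⟨Order.succ b, hb1⟩, fun i hi => ?_⟩
        have hble : (⟨Order.succ b, hb1⟩ : Set.Iio (μ₀.ord.cof).ord) ≤ ec.symm i := by
          rw [← ec.symm_apply_apply ⟨Order.succ b, hb1⟩]
          exact ec.symm.monotone hi
        have hbi : b < ((ec.symm i : Set.Iio (μ₀.ord.cof).ord) : Ordinal) :=
          lt_of_lt_of_le (Order.lt_succ b) (Subtype.coe_le_coe.mpr hble)
        have hflt : f b hb < f (ec.symm i).1 (ec.symm i).2 := hf.strict_mono hb _ hbi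
        have hζτ : e ⟨j, hj⟩ < τ i := by
          rw [hτ, ← em.apply_symm_apply (e ⟨j, hj⟩)]
          exact em.lt_iff_lt.mpr (Subtype.coe_lt_coe.mp (lt_of_le_of_lt hzb hflt))
        rw [hw]
        simp only [dif_pos hj, if_pos hζτ]
      exact hA (μ₀.ord.cof) hcofA hreg hcofB w hwA x hconv
  have hsub : closure A ⊆ A := fun x hx => key β x hx
    (by refine le_trans (Cardinal.mk_subtype_le _) ?_; rw [Cardinal.mk_ord_toType])
  exact isClosed_of_closure_subset hsub
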